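/- Let F_q(t) = ∑_{m=0}^∞ B_m(q) t^m/m! be the exponential generating function of the q-Bernoulli numbers. Then F_q(qt) = e^t F_q(t) − t e^t as an identity of formal power series (or of analytic functions where convergent). -/

import Mathlib

/-- The `q`-Bernoulli numbers: `B_0(q) = (q-1)/log q` and, for `m ≥ 1`,
`B_m(q) = (q-1)^{1-m} (∑_{r=1}^m (-1)^r C(m,r) r/(q^r-1) + 1/log q)`. -/
noncomputable def qBern (q : ℝ) (m : ℕ) : ℝ :=
  if m = 0 then (q - 1) / Real.log q
  else (q - 1) ^ (1 - (m : ℤ)) *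
    (∑ r ∈ Finset.Icc 1 m, (-1 : ℝ) ^ r * (m.choose r : ℝ) * r / (q ^ r - 1) + 1 / Real.log q)

open Finset

noncomputable def gq (q : ℝ) (r : ℕ) : ℝ := if r = 0 then 1 / Real.log q else r / (q ^ r - 1)

lemma qBern_eq (q : ℝ) (m : ℕ) :
    qBern q m = (q - 1) ^ (1 - (m : ℤ)) *
      ∑ r ∈ Finset.range (m + 1), (-1 : ℝ) ^ r * (m.choose r : ℝ) * gq q r := by
  rcases Nat.eq_zero_or_pos m with hm | hm
  · subst hm; simp [qBern, gq, div_eq_mul_inv]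
  · rw [qBern, if_neg hm.ne', Finset.sum_range_succ']
    congr 2
    · rw [← Finset.Ico_add_one_right_eq_Icc, Finset.sum_Ico_eq_sum_range]
      refine Finset.sum_congr rfl fun i _ => ?_
      simp [gq, add_comm 1 i, div_eq_mul_inv, mul_assoc]
    · simp [gq]

lemma binom_sum (a : ℝ) (ha : a ≠ 0) {n r : ℕ} (hr : r ≤ n) :
    ∑ k ∈ Finset.range (n + 1), (n.choose k : ℝ) * (k.choose r : ℝ) * a ^ (1 - (k : ℤ))
      = (n.choose r : ℝ) * (a + 1) ^ (n - r) * a ^ (1 - (n : ℤ)) := by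
  rw [range_eq_Ico, ← Finset.sum_Ico_consecutive _ (Nat.zero_le r) (by omega : r ≤ n + 1)]
  rw [Finset.sum_eq_zero (fun k hk => by
    simp [Nat.choose_eq_zero_of_lt (Finset.mem_Ico.1 hk).2]), zero_add]
  rw [Finset.sum_Ico_eq_sum_range]
  have h1 : n + 1 - r = (n - r) + 1 := by omega
  have h2 : ∀ j : ℕ, a ^ (1 - ((r + j : ℕ) : ℤ)) = a ^ (1 - (r : ℤ)) * (a⁻¹) ^ j := by
    intro j
    rw [show (1 - ((r + j : ℕ) : ℤ)) = (1 - (r : ℤ)) + (-j) by push_cast; ring,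
      zpow_add₀ ha, zpow_neg, zpow_natCast, ← inv_pow]
  calc ∑ j ∈ Finset.range (n + 1 - r),
        (n.choose (r + j) : ℝ) * ((r + j).choose r : ℝ) * a ^ (1 - ((r + j : ℕ) : ℤ))
      = (n.choose r : ℝ) * a ^ (1 - (r : ℤ)) *
          ∑ j ∈ Finset.range ((n - r) + 1), ((n - r).choose j : ℝ) * (a⁻¹) ^ j := by
        rw [h1, Finset.mul_sum]
        refine Finset.sum_congr rfl fun j hj => ?_
        have hj' : j ≤ n - r := Nat.lt_succ_iff.1 (Finset.mem_range.1 hj)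
        have hc : (n.choose (r + j) : ℝ) * ((r + j).choose r : ℝ)
            = (n.choose r : ℝ) * ((n - r).choose j : ℝ) := by
          rw [← Nat.cast_mul, ← Nat.cast_mul,
            Nat.choose_mul (Nat.le_add_right r j)]
          congr 3 <;> omega
        rw [h2 j]
        linear_combination (a ^ (1 - (r : ℤ)) * a⁻¹ ^ j) * hc
    _ = (n.choose r : ℝ) * (a + 1) ^ (n - r) * a ^ (1 - (n : ℤ)) := by
        have : ∑ j ∈ Finset.range ((n - r) + 1), ((n - r).choose j : ℝ) * (a⁻¹) ^ j
            = (a⁻¹ + 1) ^ (n - r) := by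
          rw [add_pow]
          refine Finset.sum_congr rfl fun j hj => by ring
        rw [this]
        have key : a ^ (1 - (r : ℤ)) = a ^ (1 - (n : ℤ)) * a ^ (n - r) := by
          rw [← zpow_natCast a (n - r), ← zpow_add₀ ha]
          congr 1; push_cast [Nat.cast_sub hr]; ring
        rw [key]
        have h3 : a ^ (n - r) * (a⁻¹ + 1) ^ (n - r) = (a + 1) ^ (n - r) := by
          rw [← mul_pow]
          congr 1
          field_simp
          ring
        linear_combination ((n.choose r : ℝ) * a ^ (1 - (n : ℤ))) * h3

lemma alt_sum (x : ℝ) (n : ℕ) :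
    ∑ r ∈ Finset.range (n + 1), (-1 : ℝ) ^ (r + 1) * (n.choose r : ℝ) * r * x ^ (n - r)
      = n * (x - 1) ^ (n - 1) := by
  cases n with
  | zero => simp
  | succ m =>
    rw [Finset.sum_range_succ']
    simp only [Nat.cast_zero, mul_zero, zero_mul, add_zero]
    have hb : (x - 1) ^ m = ∑ k ∈ Finset.range (m + 1), (-1 : ℝ) ^ k * x ^ (m - k) * (m.choose k : ℝ) := by
      rw [show x - 1 = -1 + x by ring, add_pow]
    rw [Nat.add_sub_cancel, hb, Finset.mul_sum]
    refine Finset.sum_congr rfl fun s hs => ?_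
    have hc : (m + 1) * m.choose s = (m + 1).choose (s + 1) * (s + 1) := Nat.add_one_mul_choose_eq m s
    have hc' : ((m : ℝ) + 1) * (m.choose s : ℝ) = ((m + 1).choose (s + 1) : ℝ) * ((s : ℝ) + 1) := by
      exact_mod_cast hc
    have hms : m + 1 - (s + 1) = m - s := by omega
    rw [hms]
    push_cast
    linear_combination (-(-1 : ℝ) ^ s * x ^ (m - s)) * hc'

lemma key (q : ℝ) (hq0 : 0 < q) (hq1 : q < 1) (n : ℕ) :
    ∑ k ∈ Finset.range (n + 1), (n.choose k : ℝ) * qBern q k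
      = q ^ n * qBern q n + n := by
  have ha : q - 1 ≠ 0 := sub_ne_zero.2 hq1.ne
  have hpr : ∀ r : ℕ, r ≠ 0 → q ^ r - 1 ≠ 0 := fun r hr =>
    ne_of_lt (by nlinarith [pow_lt_one₀ hq0.le hq1 hr] : q ^ r - 1 < 0)
  -- Step A : swap sums and evaluate inner binomial sum
  have hA : ∑ k ∈ Finset.range (n + 1), (n.choose k : ℝ) * qBern q k
      = ∑ r ∈ Finset.range (n + 1),
          ((-1 : ℝ) ^ r * gq q r) *
            ((n.choose r : ℝ) * q ^ (n - r) * (q - 1) ^ (1 - (n : ℤ))) := by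
    have h1 : ∀ k ∈ Finset.range (n + 1),
        (n.choose k : ℝ) * qBern q k
          = ∑ r ∈ Finset.range (n + 1),
              ((-1 : ℝ) ^ r * gq q r) *
                ((n.choose k : ℝ) * (k.choose r : ℝ) * (q - 1) ^ (1 - (k : ℤ))) := by
      intro k hk
      have hkn : k + 1 ≤ n + 1 := Finset.mem_range.1 hk
      rw [qBern_eq, ← Finset.sum_subset (Finset.range_subset_range.2 hkn)
        (fun r _ hr => by
          have : k < r := by simpa using hr
          simp [Nat.choose_eq_zero_of_lt this])]
      rw [Finset.mul_sum, Finset.mul_sum]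
      exact Finset.sum_congr rfl fun r _ => by ring
    rw [Finset.sum_congr rfl h1, Finset.sum_comm]
    refine Finset.sum_congr rfl fun r hr => ?_
    rw [← Finset.mul_sum,
      binom_sum (q - 1) ha (Nat.lt_succ_iff.1 (Finset.mem_range.1 hr)),
      sub_add_cancel]
  rw [hA, qBern_eq]
  -- Step B : reduce to alternating sum identity
  have hB : ∑ r ∈ Finset.range (n + 1),
        ((-1 : ℝ) ^ r * gq q r) *
          ((n.choose r : ℝ) * q ^ (n - r) * (q - 1) ^ (1 - (n : ℤ)))
      - q ^ n * ((q - 1) ^ (1 - (n : ℤ)) *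
          ∑ r ∈ Finset.range (n + 1), (-1 : ℝ) ^ r * (n.choose r : ℝ) * gq q r)
      = (q - 1) ^ (1 - (n : ℤ)) *
          ∑ r ∈ Finset.range (n + 1),
            (-1 : ℝ) ^ (r + 1) * (n.choose r : ℝ) * r * q ^ (n - r) := by
    rw [Finset.mul_sum, Finset.mul_sum, Finset.mul_sum, ← Finset.sum_sub_distrib]
    refine Finset.sum_congr rfl fun r hr => ?_
    have hrn : r ≤ n := Nat.lt_succ_iff.1 (Finset.mem_range.1 hr)
    rcases Nat.eq_zero_or_pos r with h0 | h0
    · subst h0; simp [Nat.sub_zero]; ring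
    · have hgr : gq q r = r / (q ^ r - 1) := by simp [gq, h0.ne']
      have hq' : q ^ n = q ^ (n - r) * q ^ r := by
        rw [← pow_add, Nat.sub_add_cancel hrn]
      rw [hgr, hq']
      field_simp [hpr r h0.ne']
      ring
  have hfin : (q - 1) ^ (1 - (n : ℤ)) *
      ∑ r ∈ Finset.range (n + 1),
        (-1 : ℝ) ^ (r + 1) * (n.choose r : ℝ) * r * q ^ (n - r) = n := by
    rw [alt_sum]
    rcases Nat.eq_zero_or_pos n with h0 | h0
    · subst h0; simp
    · have : ((q - 1) ^ (n - 1) : ℝ) = (q - 1) ^ (((n : ℤ)) - 1) := by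
        rw [← zpow_natCast]
        congr 1
        omega
      rw [this, mul_comm ((n : ℝ)) _, ← mul_assoc, ← zpow_add₀ ha]
      simp
  linarith [hB, hfin]

/-- `F_q(qt) = e^t F_q(t) - t e^t` for the generating function
`F_q(t) = ∑ B_m(q) t^m/m!`, as formal power series. -/
theorem stmt_11 (q : ℝ) (hq0 : 0 < q) (hq1 : q < 1) :
    (PowerSeries.mk fun m => qBern q m * q ^ m / (m.factorial : ℝ))
      = PowerSeries.exp ℝ * (PowerSeries.mk fun m => qBern q m / (m.factorial : ℝ))
        - PowerSeries.X * PowerSeries.exp ℝ := by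
  have hf : ∀ n : ℕ, ((n.factorial : ℝ)) ≠ 0 := fun n => Nat.cast_ne_zero.2 n.factorial_pos.ne'
  have hkey2 : ∀ n : ℕ, ∑ k ∈ Finset.range (n + 1),
        (1 / (k.factorial : ℝ)) * (qBern q (n - k) / ((n - k).factorial : ℝ))
      = qBern q n * q ^ n / (n.factorial : ℝ) + n / (n.factorial : ℝ) := by
    intro n
    have h := key q hq0 hq1 n
    calc ∑ k ∈ Finset.range (n + 1),
          (1 / (k.factorial : ℝ)) * (qBern q (n - k) / ((n - k).factorial : ℝ))
        = ∑ k ∈ Finset.range (n + 1),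
            (n.choose (n - k) : ℝ) * qBern q (n - k) / (n.factorial : ℝ) := by
          refine Finset.sum_congr rfl fun k hk => ?_
          have hkn : k ≤ n := Nat.lt_succ_iff.1 (Finset.mem_range.1 hk)
          rw [Nat.cast_choose ℝ (Nat.sub_le n k)]
          have : n - (n - k) = k := by omega
          rw [this]
          field_simp
      _ = ∑ k ∈ Finset.range (n + 1), (n.choose k : ℝ) * qBern q k / (n.factorial : ℝ) := by
          have := Finset.sum_range_reflect
            (fun k => (n.choose k : ℝ) * qBern q k / (n.factorial : ℝ)) (n + 1)
          simpa using this
      _ = qBern q n * q ^ n / (n.factorial : ℝ) + n / (n.factorial : ℝ) := by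
          rw [← Finset.sum_div, h]; ring
  ext n
  rw [map_sub, PowerSeries.coeff_mul, Finset.Nat.sum_antidiagonal_eq_sum_range_succ_mk,
    PowerSeries.coeff_mk]
  simp only [PowerSeries.coeff_exp, PowerSeries.coeff_mk, map_div₀, map_natCast, map_one]
  rw [hkey2 n]
  cases n with
  | zero => simp
  | succ m =>
    rw [PowerSeries.coeff_succ_X_mul, PowerSeries.coeff_exp, map_div₀, map_natCast, map_one]
    have : ((m + 1 : ℕ) : ℝ) / ((m + 1).factorial : ℝ) = 1 / (m.factorial : ℝ) := by
      rw [Nat.factorial_succ]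
      push_cast
      field_simp
    push_cast at this ⊢
    rw [this]
    ring
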